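/- Let R be a commutative Bezout ring of stable range 2 and let a ∈ R be a regular element. Then a is an avoidable element if and only if the quotient ring R/aR is a clean ring. -/

import Mathlib

/-- A regular element: a nonzero element that is not a zero divisor. -/
def IsRegularElem {R : Type*} [CommRing R] (a : R) : Prop :=
  a ≠ 0 ∧ ∀ x : R, a * x = 0 → x = 0

/-- Stable range 2. -/
def HasStableRange2 (R : Type*) [CommRing R] : Prop :=
  ∀ a b c : R, Ideal.span {a, b, c} = ⊤ →
    ∃ x y : R, Ideal.span {a + c * x, b + c * y} = ⊤

/-- Stable range 1. -/
def HasStableRange1 (S : Type*) [CommRing S] : Prop :=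
  ∀ a b : S, Ideal.span {a, b} = ⊤ → ∃ y : S, IsUnit (a + b * y)

/-- Inpseudo-irreducible element: any factorization is comaximal. -/
def IsInpseudoIrreducible {R : Type*} [CommRing R] (a : R) : Prop :=
  ∀ b c : R, a = b * c → Ideal.span {b, c} = ⊤

/-- Pseudo-irreducible element. -/
def IsPseudoIrreducible {R : Type*} [CommRing R] (a : R) : Prop :=
  ∀ b c : R, a = b * c → ¬IsUnit b → ¬IsUnit c → Ideal.span {b, c} ≠ ⊤

/-- Adequate element of a Bezout ring. -/
def IsAdequateElem {R : Type*} [CommRing R] (a : R) : Prop :=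
  ∀ b : R, ∃ r s : R, a = r * s ∧ Ideal.span {r, b} = ⊤ ∧
    ∀ s' : R, ¬IsUnit s' → s' ∣ s → Ideal.span {s', b} ≠ ⊤

/-- Avoidable element. -/
def IsAvoidableElem {R : Type*} [CommRing R] (a : R) : Prop :=
  ∀ b c : R, Ideal.span {a, b, c} = ⊤ →
    ∃ r s : R, a = r * s ∧ Ideal.span {r, b} = ⊤ ∧ Ideal.span {s, c} = ⊤ ∧
      Ideal.span {r, s} = ⊤

/-- Gelfand element. -/
def IsGelfandElem {R : Type*} [CommRing R] (a : R) : Prop :=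
  ∀ b c : R, Ideal.span {a, b, c} = ⊤ →
    ∃ r s : R, a = r * s ∧ Ideal.span {r, b} = ⊤ ∧ Ideal.span {s, c} = ⊤

/-- Semipotent element. -/
def IsSemipotentElem {R : Type*} [CommRing R] (a : R) : Prop :=
  ∀ b : R,
    Ideal.Quotient.mk (Ideal.span {a}) b ∉
      Ideal.jacobson (⊥ : Ideal (R ⧸ Ideal.span ({a} : Set R))) →
    ∃ r s : R, ¬IsUnit r ∧ ¬IsUnit s ∧ a = r * s ∧
      Ideal.span {r, b} = ⊤ ∧ Ideal.span {r, s} = ⊤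

/-- Gelfand ring. -/
def IsGelfandRing (S : Type*) [CommRing S] : Prop :=
  ∀ a b : S, a + b = 1 → ∃ r s : S, (1 + a * r) * (1 + b * s) = 0

/-- Clean ring: every element is a unit plus an idempotent. -/
def IsCleanRing (S : Type*) [CommRing S] : Prop :=
  ∀ a : S, ∃ u e : S, IsUnit u ∧ IsIdempotentElem e ∧ a = u + e

/-- Von Neumann regular ring. -/
def IsVNRegularRing (S : Type*) [CommRing S] : Prop :=
  ∀ a : S, ∃ x : S, a = a * x * a

/-- Semiregular ring: S/J(S) is von Neumann regular and idempotents lift modulo J(S). -/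
def IsSemiregularRing (S : Type*) [CommRing S] : Prop :=
  IsVNRegularRing (S ⧸ Ideal.jacobson (⊥ : Ideal S)) ∧
  ∀ x : S, IsIdempotentElem (Ideal.Quotient.mk (Ideal.jacobson (⊥ : Ideal S)) x) →
    ∃ e : S, IsIdempotentElem e ∧
      Ideal.Quotient.mk (Ideal.jacobson (⊥ : Ideal S)) e =
        Ideal.Quotient.mk (Ideal.jacobson (⊥ : Ideal S)) x

/-- Semipotent ring: every principal ideal not contained in the Jacobson radical
contains a nonzero idempotent. -/
def IsSemipotentRing (S : Type*) [CommRing S] : Prop :=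
  ∀ b : S, ¬(Ideal.span {b} ≤ Ideal.jacobson (⊥ : Ideal S)) →
    ∃ e : S, e ≠ 0 ∧ IsIdempotentElem e ∧ e ∈ Ideal.span ({b} : Set S)

/-- Indecomposable ring: the only idempotents are 0 and 1. -/
def IsIndecomposableRing (S : Type*) [CommRing S] : Prop :=
  ∀ e : S, IsIdempotentElem e → e = 0 ∨ e = 1

/-- Semihereditary ring: every finitely generated ideal is projective. -/
def IsSemihereditaryRing (R : Type*) [CommRing R] : Prop :=
  ∀ I : Ideal R, I.FG → Module.Projective R I

/-- Regular range 1. -/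
def HasRegularRange1 (R : Type*) [CommRing R] : Prop :=
  ∀ a b : R, Ideal.span {a, b} = ⊤ → ∃ t : R, IsRegularElem (a + b * t)

/-- Gelfand range 1. -/
def HasGelfandRange1 (R : Type*) [CommRing R] : Prop :=
  ∀ a b : R, Ideal.span {a, b} = ⊤ → ∃ t : R, IsGelfandElem (a + b * t)

/-- A rectangular matrix admits diagonal reduction with successive divisibility
of the diagonal entries. -/
def AdmitsDiagReduction {R : Type*} [CommRing R] {n m : ℕ}
    (A : Matrix (Fin n) (Fin m) R) : Prop :=
  ∃ (P : Matrix (Fin n) (Fin n) R) (Q : Matrix (Fin m) (Fin m) R),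
    IsUnit P ∧ IsUnit Q ∧
    (∀ (i : Fin n) (j : Fin m), (i : ℕ) ≠ (j : ℕ) → (P * A * Q) i j = 0) ∧
    (∀ (k : ℕ) (hn : k + 1 < n) (hm : k + 1 < m),
      (P * A * Q) ⟨k, Nat.lt_of_succ_lt hn⟩ ⟨k, Nat.lt_of_succ_lt hm⟩ ∣
        (P * A * Q) ⟨k + 1, hn⟩ ⟨k + 1, hm⟩)

/-- Elementary divisor ring: every matrix admits diagonal reduction. -/
def IsElementaryDivisorRing (R : Type*) [CommRing R] : Prop :=
  ∀ (n m : ℕ) (A : Matrix (Fin n) (Fin m) R), AdmitsDiagReduction A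



section Aux
variable {S : Type*} [CommRing S]

private lemma span_pair_top_iff (x y : S) :
    Ideal.span ({x, y} : Set S) = ⊤ ↔ ∃ u v : S, u * x + v * y = 1 := by
  rw [Ideal.eq_top_iff_one, Ideal.mem_span_pair]

/-- Exchange idempotents in a clean commutative ring. -/
private lemma clean_exchange (h : IsCleanRing S) (x : S) :
    ∃ e s t : S, e * e = e ∧ e = x * s ∧ 1 - e = (1 - x) * t := by
  obtain ⟨u, f, hu, hf, hx⟩ := h x
  obtain ⟨U, hU⟩ := hu
  have hff : f * f = f := hf
  have hUu : (↑U⁻¹ : S) * u = 1 := by rw [← hU, Units.inv_mul]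
  refine ⟨1 - f, ↑U⁻¹ * (1 - f), -(↑U⁻¹ * f), ?_, ?_, ?_⟩
  · linear_combination hff
  · have h1 : x * (1 - f) = u * (1 - f) := by linear_combination (1 - f) * hx - hff
    calc 1 - f = (↑U⁻¹ * u) * (1 - f) := by rw [hUu, one_mul]
      _ = ↑U⁻¹ * (u * (1 - f)) := by ring
      _ = ↑U⁻¹ * (x * (1 - f)) := by rw [← h1]
      _ = x * (↑U⁻¹ * (1 - f)) := by ring
  · have h1 : (1 - x) * f = -(u * f) := by linear_combination (-f) * hx - hff
    calc 1 - (1 - f) = (↑U⁻¹ * u) * f := by rw [hUu]; ring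
      _ = -(↑U⁻¹ * -(u * f)) := by ring
      _ = -(↑U⁻¹ * ((1 - x) * f)) := by rw [← h1]
      _ = (1 - x) * -(↑U⁻¹ * f) := by ring

/-- The exchange property implies cleanness. -/
private lemma exchange_clean
    (h : ∀ x : S, ∃ e s t : S, e * e = e ∧ e = x * s ∧ 1 - e = (1 - x) * t) :
    IsCleanRing S := by
  intro x
  obtain ⟨e, s, t, he, hs, ht⟩ := h x
  refine ⟨x * e - (1 - x) * (1 - e), 1 - e, ?_, ?_, by ring⟩
  · refine IsUnit.of_mul_eq_one (s * e - t * (1 - e)) ?_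
    linear_combination (3 + x * t + (1 - x) * s) * he - e ^ 2 * hs - (1 - e) ^ 2 * ht
  · show (1 - e) * (1 - e) = 1 - e
    linear_combination he

private lemma mk_eq_of_dvd {R : Type*} [CommRing R] {a u v : R} (w : R)
    (h : u - v = a * w) :
    Ideal.Quotient.mk (Ideal.span {a}) u = Ideal.Quotient.mk (Ideal.span {a}) v :=
  Ideal.Quotient.eq.mpr (Ideal.mem_span_singleton.mpr ⟨w, h⟩)

private lemma dvd_of_mk_eq {R : Type*} [CommRing R] {a u v : R}
    (h : Ideal.Quotient.mk (Ideal.span {a}) u = Ideal.Quotient.mk (Ideal.span {a}) v) :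
    ∃ w, u - v = a * w :=
  Ideal.mem_span_singleton.mp (Ideal.Quotient.eq.mp h)

end Aux

theorem stmt11 {R : Type*} [CommRing R] [IsBezout R] (hR : HasStableRange2 R)
    (a : R) (hreg : IsRegularElem a) :
    IsAvoidableElem a ↔ IsCleanRing (R ⧸ Ideal.span ({a} : Set R)) := by
  constructor
  · -- avoidable → clean
    intro hav
    apply exchange_clean
    intro xb
    obtain ⟨x, rfl⟩ := Ideal.Quotient.mk_surjective xb
    have htop : Ideal.span ({a, x, 1 - x} : Set R) = ⊤ := by
      rw [Ideal.eq_top_iff_one]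
      have h1 : x ∈ Ideal.span ({a, x, 1 - x} : Set R) := Ideal.subset_span (by simp)
      have h2 : 1 - x ∈ Ideal.span ({a, x, 1 - x} : Set R) := Ideal.subset_span (by simp)
      have := add_mem h1 h2
      simpa using this
    obtain ⟨r, s, hrs, hrx, hsx, hrs2⟩ := hav x (1 - x) htop
    obtain ⟨α, β, hab⟩ := (span_pair_top_iff r s).mp hrs2
    obtain ⟨γ, δ, hgd⟩ := (span_pair_top_iff r x).mp hrx
    obtain ⟨σ, τ, hst⟩ := (span_pair_top_iff s (1 - x)).mp hsx
    set π := Ideal.Quotient.mk (Ideal.span ({a} : Set R)) with hπ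
    refine ⟨π (β * s), π (δ * β * s), π (τ * α * r), ?_, ?_, ?_⟩
    · calc π (β * s) * π (β * s) = π ((β * s) * (β * s)) := (map_mul π _ _).symm
        _ = π (β * s) := mk_eq_of_dvd (-(α * β))
            (by linear_combination (β * s) * hab + (α * β) * hrs)
    · calc π (β * s) = π (x * (δ * β * s)) := mk_eq_of_dvd (γ * β)
            (by linear_combination (-(β * s)) * hgd - γ * β * hrs)
        _ = π x * π (δ * β * s) := map_mul π _ _
    · calc 1 - π (β * s) = π (1 - β * s) := by rw [map_sub, map_one]
        _ = π ((1 - x) * (τ * α * r)) := mk_eq_of_dvd (α * σ)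
            (by linear_combination -hab - (α * r) * hst - (α * σ) * hrs)
        _ = π (1 - x) * π (τ * α * r) := map_mul π _ _
        _ = (1 - π x) * π (τ * α * r) := by rw [map_sub, map_one]
  · -- clean → avoidable
    intro hcl b c htop
    have hone : (1 : R) ∈ Ideal.span ({a, b, c} : Set R) := by rw [htop]; trivial
    obtain ⟨u1, z, hz, h1⟩ := Ideal.mem_span_insert.mp hone
    obtain ⟨u2, u3, hz2⟩ := Ideal.mem_span_pair.mp hz
    have hu : u1 * a + u2 * b + u3 * c = 1 := by
      rw [← hz2] at h1; linear_combination -h1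
    set π := Ideal.Quotient.mk (Ideal.span ({a} : Set R)) with hπ
    obtain ⟨e, se, te, he, hse, hte⟩ := clean_exchange hcl (π (u2 * b))
    obtain ⟨E, hE⟩ := Ideal.Quotient.mk_surjective e
    obtain ⟨s₁, hs₁⟩ := Ideal.Quotient.mk_surjective se
    obtain ⟨t₁, ht₁⟩ := Ideal.Quotient.mk_surjective te
    obtain ⟨w, hw⟩ : ∃ w, E * E - E = a * w := by
      apply dvd_of_mk_eq; rw [map_mul, hE]; exact he
    obtain ⟨w1, hw1⟩ : ∃ w1, E - u2 * b * s₁ = a * w1 := by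
      apply dvd_of_mk_eq; rw [map_mul, hE, hs₁]; exact hse
    obtain ⟨w2, hw2⟩ : ∃ w2, (1 - E) - (1 - u2 * b) * t₁ = a * w2 := by
      apply dvd_of_mk_eq; rw [map_sub, map_one, map_mul, map_sub, map_one, hE, ht₁]
      exact hte
    -- Bezout gcds, as opaque elements
    obtain ⟨r, ⟨a₁, ha₁⟩, ⟨k, hk⟩, p, q, hpq⟩ :
        ∃ r : R, (∃ a₁, a = r * a₁) ∧ (∃ k, 1 - E = r * k) ∧
          ∃ p q, p * a + q * (1 - E) = r :=
      ⟨IsBezout.gcd a (1 - E), IsBezout.gcd_dvd_left a (1 - E),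
        IsBezout.gcd_dvd_right a (1 - E), IsBezout.gcd_eq_sum a (1 - E)⟩
    obtain ⟨s, ⟨a₂, ha₂⟩, ⟨k', hk'⟩, p', q', hpq'⟩ :
        ∃ s : R, (∃ a₂, a = s * a₂) ∧ (∃ k', E = s * k') ∧
          ∃ p' q', p' * a + q' * E = s :=
      ⟨IsBezout.gcd a E, IsBezout.gcd_dvd_left a E,
        IsBezout.gcd_dvd_right a E, IsBezout.gcd_eq_sum a E⟩
    have hcom : k * r + k' * s = 1 := by linear_combination -hk - hk'
    obtain ⟨n, hn⟩ : ∃ n, r * s = a * n :=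
      ⟨p * p' * a + p * q' * E + q * p' * (1 - E) - q * q' * w,
        by linear_combination (-s) * hpq - (p * a + q * (1 - E)) * hpq' - q * q' * hw⟩
    set m := k * a₂ + k' * a₁ with hmdef
    have hm : a = r * s * m := by
      linear_combination k * r * ha₂ + k' * s * ha₁ - a * hcom
    have hmn : m * n = 1 := by
      have h0 : a * (1 - n * m) = 0 := by linear_combination hm + m * hn
      have h2 := hreg.2 _ h0
      linear_combination -h2
    refine ⟨r * m, s, by linear_combination hm, ?_, ?_, ?_⟩
    · rw [span_pair_top_iff]
      refine ⟨n * (k + a₁ * w1), u2 * s₁, ?_⟩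
      have key : r * (k + a₁ * w1) + u2 * s₁ * b = 1 := by
        linear_combination -hk - hw1 - w1 * ha₁
      linear_combination key + (r * (k + a₁ * w1)) * hmn
    · rw [span_pair_top_iff]
      refine ⟨k' + a₂ * (u1 * t₁ + w2), u3 * t₁, ?_⟩
      linear_combination t₁ * hu - hk' - hw2 - (u1 * t₁ + w2) * ha₂
    · rw [span_pair_top_iff]
      exact ⟨n * k, k', by linear_combination k * r * hmn + hcom⟩
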